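/- Let D be a commutative C*-algebra and X a Hilbert D-module. If ξ, η ∈ X and there exists a positive contraction d ∈ D with ξ·d = ξ and η·d = 0, then ‖ξ + η‖ ≤ max(‖ξ‖, ‖η‖). -/

import Mathlib

open scoped RightActions

/-- The December 2024 Mathlib `CStarModule`: a Hilbert C⋆-module with a right `A`-action. -/
class CStarModuleOp (A E : Type*) [NonUnitalSemiring A] [StarRing A]
    [Module ℂ A] [AddCommGroup E] [Module ℂ E] [PartialOrder A] [SMul Aᵐᵒᵖ E] [Norm A] [Norm E]
    extends Inner A E where
  inner_add_right {x} {y} {z} : inner x (y + z) = inner x y + inner x z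
  inner_self_nonneg {x} : 0 ≤ inner x x
  inner_self {x} : inner x x = 0 ↔ x = 0
  inner_op_smul_right {a : A} {x y : E} : inner x (y <• a) = inner x y * a
  inner_smul_right_complex {z : ℂ} {x} {y} : inner x (z • y) = z • inner x y
  star_inner x y : star (inner x y) = inner y x
  norm_eq_sqrt_norm_inner_self x : ‖x‖ = √‖inner x x‖

namespace CStarModuleOp

section
variable {A E : Type*} [NonUnitalSemiring A] [StarRing A]
    [Module ℂ A] [AddCommGroup E] [Module ℂ E] [PartialOrder A] [SMul Aᵐᵒᵖ E] [Norm A] [Norm E]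
    [CStarModuleOp A E]

lemma inner_op_smul_left {a : A} {x y : E} : inner A (x <• a) y = star a * inner A x y := by
  rw [← star_inner y (x <• a), inner_op_smul_right, star_mul, star_inner]

lemma inner_zero_right {x : E} : inner A x (0 : E) = 0 := by
  have h : inner A x ((0 : ℂ) • x) = (0 : ℂ) • inner A x x := inner_smul_right_complex
  rw [zero_smul, zero_smul] at h
  exact h

lemma inner_add_left {x y z : E} : inner A (x + y) z = inner A x z + inner A y z := by
  rw [← star_inner z (x + y), inner_add_right, star_add, star_inner, star_inner]

lemma isSelfAdjoint_inner_self {x : E} : IsSelfAdjoint (inner A x x) := star_inner x x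
end

lemma norm_sq_eq {D X : Type*} [NonUnitalCommCStarAlgebra D] [PartialOrder D]
    [NormedAddCommGroup X] [Module ℂ X] [SMul Dᵐᵒᵖ X] [CStarModuleOp D X] {x : X} :
    ‖x‖ ^ 2 = ‖inner D x x‖ := by
  rw [norm_eq_sqrt_norm_inner_self (A := D) x, Real.sq_sqrt (norm_nonneg _)]

end CStarModuleOp

private lemma my_add_pow_of_mul_eq_zero {E : Type*} [Ring E]
    (a b : E) (hab : a * b = 0) (hba : b * a = 0) (n : ℕ) :
    (a + b) ^ (n + 1) = a ^ (n + 1) + b ^ (n + 1) := by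
  induction n with
  | zero => simp
  | succ n ih =>
    have h1 : a ^ (n + 1) * b = 0 := by rw [pow_succ, mul_assoc, hab, mul_zero]
    have h2 : b ^ (n + 1) * a = 0 := by rw [pow_succ, mul_assoc, hba, mul_zero]
    calc (a + b) ^ (n + 2) = (a ^ (n + 1) + b ^ (n + 1)) * (a + b) := by
          rw [pow_succ, ih]
      _ = a ^ (n + 2) + b ^ (n + 2) := by
          rw [add_mul, mul_add, mul_add, h1, h2, ← pow_succ, ← pow_succ]
          abel

private lemma my_norm_pow_two_pow {E : Type*} [NormedRing E] [StarRing E] [CStarRing E]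
    {a : E} (ha : IsSelfAdjoint a) (n : ℕ) :
    ‖a ^ (2 ^ n)‖ = ‖a‖ ^ (2 ^ n) := by
  induction n with
  | zero => simp
  | succ n ih =>
    have hsa : IsSelfAdjoint (a ^ (2 ^ n)) := ha.pow _
    have key : ‖(a ^ (2 ^ n)) ^ 2‖ = ‖a ^ (2 ^ n)‖ ^ 2 := by
      calc ‖(a ^ (2 ^ n)) ^ 2‖ = ‖star (a ^ (2 ^ n)) * a ^ (2 ^ n)‖ := by
            rw [hsa.star_eq, sq]
        _ = ‖a ^ (2 ^ n)‖ * ‖a ^ (2 ^ n)‖ := CStarRing.norm_star_mul_self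
        _ = ‖a ^ (2 ^ n)‖ ^ 2 := (sq _).symm
    rw [pow_succ, pow_mul, key, ih, ← pow_mul, ← pow_succ]

private lemma my_norm_add_le_max {E : Type*} [NormedRing E] [StarRing E] [CStarRing E]
    {a b : E} (ha : IsSelfAdjoint a) (hb : IsSelfAdjoint b)
    (hab : a * b = 0) (hba : b * a = 0) :
    ‖a + b‖ ≤ max ‖a‖ ‖b‖ := by
  set M : ℝ := max ‖a‖ ‖b‖ with hM
  have hM0 : 0 ≤ M := le_trans (norm_nonneg a) (le_max_left _ _)
  have key : ∀ n : ℕ, ‖a + b‖ ^ (2 ^ n) ≤ 2 * M ^ (2 ^ n) := by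
    intro n
    have hsum : IsSelfAdjoint (a + b) := ha.add hb
    have h2n : 2 ^ n = (2 ^ n - 1) + 1 := by
      have : 1 ≤ 2 ^ n := Nat.one_le_two_pow
      omega
    calc ‖a + b‖ ^ (2 ^ n) = ‖(a + b) ^ (2 ^ n)‖ := (my_norm_pow_two_pow hsum n).symm
      _ = ‖a ^ (2 ^ n) + b ^ (2 ^ n)‖ := by
          rw [h2n, my_add_pow_of_mul_eq_zero a b hab hba]
      _ ≤ ‖a ^ (2 ^ n)‖ + ‖b ^ (2 ^ n)‖ := norm_add_le _ _
      _ = ‖a‖ ^ (2 ^ n) + ‖b‖ ^ (2 ^ n) := by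
          rw [my_norm_pow_two_pow ha n, my_norm_pow_two_pow hb n]
      _ ≤ M ^ (2 ^ n) + M ^ (2 ^ n) := by
          gcongr
          · exact le_max_left _ _
          · exact le_max_right _ _
      _ = 2 * M ^ (2 ^ n) := by ring
  by_contra h
  push_neg at h
  rcases eq_or_lt_of_le hM0 with hM0' | hM0'
  · have ha0 : a = 0 := norm_eq_zero.mp <| le_antisymm
      ((le_max_left _ _).trans (hM ▸ hM0'.ge)) (norm_nonneg a)
    have hb0 : b = 0 := norm_eq_zero.mp <| le_antisymm
      ((le_max_right _ _).trans (hM ▸ hM0'.ge)) (norm_nonneg b)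
    rw [ha0, hb0, add_zero, norm_zero] at h
    exact absurd (h.trans_le hM0) (lt_irrefl _)
  · set r : ℝ := ‖a + b‖ / M with hr
    have hr1 : 1 < r := (one_lt_div hM0').mpr h
    have hrle : ∀ n : ℕ, r ^ (2 ^ n) ≤ 2 := by
      intro n
      rw [hr, div_pow, div_le_iff₀ (by positivity)]
      exact key n
    obtain ⟨k, hk⟩ := pow_unbounded_of_one_lt (2 : ℝ) hr1
    have hkle : r ^ k ≤ r ^ (2 ^ k) :=
      pow_le_pow_right₀ hr1.le (Nat.lt_two_pow_self (n := k)).le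
    exact absurd (hkle.trans (hrle k)) (not_le.mpr hk)

/-- If `ξ·d = ξ` and `η·d = 0` for a positive contraction `d` in a commutative
C*-algebra `D`, then `‖ξ + η‖ ≤ max ‖ξ‖ ‖η‖` in the Hilbert `D`-module `X`. -/
theorem norm_add_le_max_of_smul_fixed_and_killed
    {D X : Type*} [NonUnitalCommCStarAlgebra D] [PartialOrder D] [StarOrderedRing D]
    [NormedAddCommGroup X] [Module ℂ X] [SMul Dᵐᵒᵖ X] [CStarModuleOp D X]
    (ξ η : X) (d : D) (hd0 : 0 ≤ d) (hd1 : ‖d‖ ≤ 1)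
    (hξ : ξ <• d = ξ) (hη : η <• d = 0) :
    ‖ξ + η‖ ≤ max ‖ξ‖ ‖η‖ := by
  have hds : star d = d := IsSelfAdjoint.of_nonneg hd0
  set a : D := inner (𝕜 := D) ξ ξ with ha
  set b : D := inner (𝕜 := D) η η with hb
  -- the cross inner products vanish
  have hcross : inner (𝕜 := D) ξ η = 0 := by
    have h1 : inner (𝕜 := D) ξ η = d * inner (𝕜 := D) ξ η := by
      conv_lhs => rw [← hξ]
      rw [CStarModuleOp.inner_op_smul_left, hds]
    have h2 : inner (𝕜 := D) ξ η * d = 0 := by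
      rw [← CStarModuleOp.inner_op_smul_right, hη, CStarModuleOp.inner_zero_right]
    rw [h1, mul_comm, h2]
  have hcross' : inner (𝕜 := D) η ξ = 0 := by
    rw [← CStarModuleOp.star_inner, hcross, star_zero]
  -- `a * b = 0`
  have had : a = d * a * d := by
    conv_lhs => rw [ha]
    conv_lhs => rw [← hξ]
    rw [CStarModuleOp.inner_op_smul_left, CStarModuleOp.inner_op_smul_right, hds, ha, mul_assoc]
  have hbd : b * d = 0 := by
    rw [hb, ← CStarModuleOp.inner_op_smul_right, hη, CStarModuleOp.inner_zero_right]
  have hab : a * b = 0 := by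
    rw [had, mul_assoc, mul_comm d b, hbd, mul_zero]
  have hba : b * a = 0 := by rw [mul_comm, hab]
  have hsa : IsSelfAdjoint a := CStarModuleOp.isSelfAdjoint_inner_self
  have hsb : IsSelfAdjoint b := CStarModuleOp.isSelfAdjoint_inner_self
  -- pass to the unitization to use the power trick
  have hmain : ‖a + b‖ ≤ max ‖a‖ ‖b‖ := by
    have := my_norm_add_le_max (E := Unitization ℂ D)
      ((Unitization.isSelfAdjoint_inr (R := ℂ)).mpr hsa)
      ((Unitization.isSelfAdjoint_inr (R := ℂ)).mpr hsb)
      (by rw [← Unitization.inr_mul, hab, Unitization.inr_zero])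
      (by rw [← Unitization.inr_mul, hba, Unitization.inr_zero])
    rwa [← Unitization.inr_add, Unitization.norm_inr, Unitization.norm_inr,
      Unitization.norm_inr] at this
  -- conclude via the norm formula
  have hsq : ‖ξ + η‖ ^ 2 = ‖a + b‖ := by
    rw [CStarModuleOp.norm_sq_eq (D := D)]
    congr 1
    rw [CStarModuleOp.inner_add_left, CStarModuleOp.inner_add_right,
      CStarModuleOp.inner_add_right, hcross, hcross', ← ha, ← hb]
    abel
  have hmax : max ‖a‖ ‖b‖ = (max ‖ξ‖ ‖η‖) ^ 2 := by
    rw [ha, hb, ← CStarModuleOp.norm_sq_eq (D := D), ← CStarModuleOp.norm_sq_eq (D := D)]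
    rcases le_total ‖ξ‖ ‖η‖ with hle | hle
    · rw [max_eq_right hle, max_eq_right (pow_le_pow_left₀ (norm_nonneg _) hle 2)]
    · rw [max_eq_left hle, max_eq_left (pow_le_pow_left₀ (norm_nonneg _) hle 2)]
  have hfin : ‖ξ + η‖ ^ 2 ≤ (max ‖ξ‖ ‖η‖) ^ 2 := by rw [hsq, ← hmax]; exact hmain
  have h0 : 0 ≤ max ‖ξ‖ ‖η‖ := le_trans (norm_nonneg ξ) (le_max_left _ _)
  exact (pow_le_pow_iff_left₀ (norm_nonneg _) h0 two_ne_zero).mp hfin
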